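/- Let G be a finite group of odd order and let K be its K-set. Then for all elements a, b of G, the commutator [a,b] belongs to K. -/

import Mathlib

/-- The K-set of a group `G`: the set of all elements expressible as a product,
taken in some order, of all the non-identity elements of `G`, each occurring
exactly once. -/
def KSet (G : Type*) [Group G] : Set G :=
  {x | ∃ l : List G, l.Nodup ∧ (∀ g : G, g ∈ l ↔ g ≠ 1) ∧ l.prod = x}

lemma KSet.no_self_inv {G : Type*} [Group G] [Fintype G]
    (hG : Odd (Fintype.card G)) {g : G} (hg : g ≠ 1) : g⁻¹ ≠ g := by
  intro h
  have h2 : g ^ 2 = 1 := by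
    have := congrArg (g * ·) h
    simpa [pow_two] using this.symm
  have hd : orderOf g ∣ 2 := orderOf_dvd_of_pow_eq_one h2
  have hcard : orderOf g ∣ Fintype.card G := orderOf_dvd_card
  rcases (Nat.dvd_prime Nat.prime_two).mp hd with h1 | h2'
  · exact hg (orderOf_eq_one_iff.mp h1)
  · rw [h2'] at hcard
    exact (Nat.not_even_iff_odd.mpr hG) (even_iff_two_dvd.mpr hcard)

lemma KSet.pairing {G : Type*} [Group G] [DecidableEq G] (s : Finset G)
    (hinv : ∀ g ∈ s, g⁻¹ ∈ s) (hself : ∀ g ∈ s, g⁻¹ ≠ g) :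
    ∃ l : List G, l.Nodup ∧ (∀ g, g ∈ l ↔ g ∈ s) ∧ l.prod = 1 := by
  induction s using Finset.strongInductionOn with
  | _ s ih =>
    rcases s.eq_empty_or_nonempty with rfl | ⟨g, hg⟩
    · exact ⟨[], by simp, by simp, by simp⟩
    · have hginv : g⁻¹ ∈ s := hinv g hg
      have hne : g⁻¹ ≠ g := hself g hg
      set t := s \ {g, g⁻¹} with ht
      have hsub : t ⊂ s := by
        apply Finset.sdiff_ssubset (by simp [Finset.insert_subset_iff, hg, hginv])
        simp
      obtain ⟨l, hnd, hmem, hprod⟩ := ih t hsub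
        (fun x hx => by
          simp only [ht, Finset.mem_sdiff, Finset.mem_insert, Finset.mem_singleton] at hx ⊢
          obtain ⟨hx1, hx2⟩ := hx
          refine ⟨hinv x hx1, ?_⟩
          rintro (h | h)
          · exact hx2 (Or.inr (by rw [← h, inv_inv]))
          · exact hx2 (Or.inl (inv_injective h)))
        (fun x hx => hself x (Finset.mem_sdiff.mp hx).1)
      refine ⟨g :: g⁻¹ :: l, ?_, ?_, ?_⟩
      · simp only [List.nodup_cons, List.mem_cons, hnd, and_true]
        have hgl : g ∉ l := by
          intro h; have := (hmem g).mp h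
          simp [ht] at this
        have hgl' : g⁻¹ ∉ l := by
          intro h; have := (hmem g⁻¹).mp h
          simp [ht] at this
        exact ⟨by tauto, hgl'⟩
      · intro x
        simp only [List.mem_cons, hmem, ht, Finset.mem_sdiff, Finset.mem_insert,
          Finset.mem_singleton]
        constructor
        · rintro (rfl | rfl | h)
          · exact hg
          · exact hginv
          · exact h.1
        · intro hx
          by_cases h1 : x = g
          · exact Or.inl h1
          · by_cases h2 : x = g⁻¹
            · exact Or.inr (Or.inl h2)
            · exact Or.inr (Or.inr ⟨hx, by tauto⟩)
      · simp [hprod]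

open scoped commutatorElement

theorem commutator_mem_KSet (G : Type*) [Group G] [Fintype G]
    (hG : Odd (Fintype.card G)) (a b : G) :
    ⁅a, b⁆ ∈ KSet G := by
  classical
  by_cases htriv : a = 1 ∨ b = 1 ∨ a = b ∨ a = b⁻¹
  · have hc : ⁅a, b⁆ = 1 := by
      rcases htriv with rfl | rfl | rfl | rfl
      · simp
      · simp
      · simp [commutatorElement_def]
      · simp [commutatorElement_def]
    rw [hc]
    obtain ⟨l, hnd, hmem, hprod⟩ := KSet.pairing (Finset.univ.erase 1)
      (fun g hg => by
        simp only [Finset.mem_erase, Finset.mem_univ, and_true] at hg ⊢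
        simpa using hg)
      (fun g hg => KSet.no_self_inv hG (by simpa using (Finset.mem_erase.mp hg).1))
    exact ⟨l, hnd, fun g => by simpa using hmem g, hprod⟩
  · push_neg at htriv
    obtain ⟨ha1, hb1, hab, hab'⟩ := htriv
    have haa : a⁻¹ ≠ a := KSet.no_self_inv hG ha1
    have hbb : b⁻¹ ≠ b := KSet.no_self_inv hG hb1
    have hai : a⁻¹ ≠ 1 := inv_ne_one.mpr ha1
    have hbi : b⁻¹ ≠ 1 := inv_ne_one.mpr hb1
    have hab2 : a⁻¹ ≠ b⁻¹ := fun h => hab (inv_injective h)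
    have hab3 : a⁻¹ ≠ b := fun h => hab' (by rw [← h, inv_inv])
    set s : Finset G := Finset.univ \ {1, a, a⁻¹, b, b⁻¹} with hs
    obtain ⟨l, hnd, hmem, hprod⟩ := KSet.pairing s
      (fun g hg => by
        simp only [hs, Finset.mem_sdiff, Finset.mem_univ, true_and, Finset.mem_insert,
          Finset.mem_singleton, not_or] at hg ⊢
        obtain ⟨h1, h2, h3, h4, h5⟩ := hg
        refine ⟨inv_ne_one.mpr h1, ?_, ?_, ?_, ?_⟩
        · intro h; exact h3 (by rw [← h, inv_inv])
        · intro h; exact h2 (inv_injective h)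
        · intro h; exact h5 (by rw [← h, inv_inv])
        · intro h; exact h4 (inv_injective h))
      (fun g hg => KSet.no_self_inv hG (by
        simp only [hs, Finset.mem_sdiff, Finset.mem_insert, Finset.mem_singleton, not_or] at hg
        exact hg.2.1))
    refine ⟨a :: b :: a⁻¹ :: b⁻¹ :: l, ?_, ?_, ?_⟩
    · have hnl : ∀ x : G, (x = a ∨ x = b ∨ x = a⁻¹ ∨ x = b⁻¹) → x ∉ l := by
        intro x hx hxl
        have h2 := (hmem x).mp hxl
        rw [hs] at h2
        simp only [Finset.mem_sdiff, Finset.mem_univ, true_and, Finset.mem_insert,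
          Finset.mem_singleton, not_or] at h2
        rcases hx with rfl | rfl | rfl | rfl <;> tauto
      simp only [List.nodup_cons, List.mem_cons]
      refine ⟨?_, ?_, ?_, ?_, hnd⟩
      · push_neg
        exact ⟨hab, fun h => haa h.symm, hab', hnl a (Or.inl rfl)⟩
      · push_neg
        exact ⟨fun h => hab3 h.symm, fun h => hbb h.symm, hnl b (Or.inr (Or.inl rfl))⟩
      · push_neg
        exact ⟨fun h => hab2 h, hnl a⁻¹ (Or.inr (Or.inr (Or.inl rfl)))⟩
      · exact hnl b⁻¹ (Or.inr (Or.inr (Or.inr rfl)))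
    · intro g
      simp only [List.mem_cons, hmem g, hs, Finset.mem_sdiff, Finset.mem_univ, true_and,
        Finset.mem_insert, Finset.mem_singleton, not_or]
      constructor
      · rintro (rfl | rfl | rfl | rfl | h)
        · exact ha1
        · exact hb1
        · exact hai
        · exact hbi
        · exact h.1
      · intro hg
        by_cases h1 : g = a;· exact Or.inl h1
        by_cases h2 : g = b;· exact Or.inr (Or.inl h2)
        by_cases h3 : g = a⁻¹;· exact Or.inr (Or.inr (Or.inl h3))
        by_cases h4 : g = b⁻¹;· exact Or.inr (Or.inr (Or.inr (Or.inl h4)))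
        exact Or.inr (Or.inr (Or.inr (Or.inr ⟨hg, h1, h3, h2, h4⟩)))
    · simp [hprod, commutatorElement_def, mul_assoc]
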